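/- For the random-walk dynamical system, define 𝔊_m:={F∈L^∞(X,ℬ_{−m,m},μ) : Avg(F) exists} and 𝔊:= the closure in the L^∞-norm of ⋃_{m∈ℕ} 𝔊_m. Then 𝔊 equals the set of all F in the L^∞-closure of ⋃_{m∈ℕ} L^∞(X,ℬ_{−m,m},μ) for which Avg(F) exists. -/

import Mathlib

noncomputable section

open MeasureTheory Filter Topology

/-- The phase space `X = ℤ^d × [0,1)²` (embedded in `ℤ^d × ℝ²`; the invariant measure
is supported on `ℤ^d × [0,1)²`). -/
abbrev RWSpace (d : ℕ) := (Fin d → ℤ) × ℝ × ℝ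

/-- The data of a random walk on `ℤ^d`: a probability distribution `p` on `ℤ^d` together
with an enumeration `e` of `ℤ^d` (whose restriction to the support of `p` enumerates the
set `D` of active directions; indices carrying zero probability contribute empty
rectangles and do not affect the map). -/
structure RW (d : ℕ) where
  p : (Fin d → ℤ) → ℝ
  nonneg : ∀ β, 0 ≤ p β
  total : HasSum p 1
  e : ℕ ≃ (Fin d → ℤ)

namespace RW

variable {d : ℕ}

/-- The cumulative sums `q_k = Σ_{j<k} p_{β^{(j)}}`. -/
def q (R : RW d) (k : ℕ) : ℝ := ∑ j ∈ Finset.range k, R.p (R.e j)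

/-- The index `k` such that `y ∈ [q_k, q_{k+1})` (for `y ∈ [0,1)`). -/
def idx (R : RW d) (y : ℝ) : ℕ := sSup {j | R.q j ≤ y}

/-- The random-walk (coupled bakers') map
`T(α; y₁, y₂) = (α + β^{(k)}; p_{β^{(k)}}⁻¹(y₁ − q_{k-1}), p_{β^{(k)}} y₂ + q_{k-1})`. -/
def T (R : RW d) : RWSpace d → RWSpace d := fun x =>
  (x.1 + R.e (R.idx x.2.1),
   (x.2.1 - R.q (R.idx x.2.1)) / R.p (R.e (R.idx x.2.1)),
   R.p (R.e (R.idx x.2.1)) * x.2.2 + R.q (R.idx x.2.1))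

/-- The inverse of the random-walk map. -/
def Tinv (R : RW d) : RWSpace d → RWSpace d := fun x =>
  (x.1 - R.e (R.idx x.2.2),
   R.p (R.e (R.idx x.2.2)) * x.2.1 + R.q (R.idx x.2.2),
   (x.2.2 - R.q (R.idx x.2.2)) / R.p (R.e (R.idx x.2.2)))

/-- The iterate `T^t` for `t ∈ ℤ` (using the inverse map for negative times). -/
def iterZ (R : RW d) (t : ℤ) : RWSpace d → RWSpace d :=
  if 0 ≤ t then (R.T)^[t.toNat] else (R.Tinv)^[(-t).toNat]

end RW

/-- The invariant measure `μ`: counting measure on `ℤ^d` times Lebesgue measure on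
`[0,1)²`. -/
def rwMeasure (d : ℕ) : Measure (RWSpace d) :=
  (Measure.count : Measure (Fin d → ℤ)).prod
    ((volume.restrict (Set.Ico (0:ℝ) 1)).prod (volume.restrict (Set.Ico (0:ℝ) 1)))

/-- The set `V = B_{γ,r} × [0,1)²`, where `B_{γ,r}` is the square box of center `γ` and
radius `r` in `ℤ^d`. -/
def rwBox {d : ℕ} (γ : Fin d → ℤ) (r : ℕ) : Set (RWSpace d) :=
  {x | (∀ i, |x.1 i - γ i| ≤ (r : ℤ)) ∧ x.2.1 ∈ Set.Ico (0:ℝ) 1 ∧ x.2.2 ∈ Set.Ico (0:ℝ) 1}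

/-- The exhaustive family `𝒱 = {B_{γ,r} × [0,1)² : γ ∈ ℤ^d, r ∈ ℤ⁺}`. -/
def rwFamily (d : ℕ) : Set (Set (RWSpace d)) :=
  {V | ∃ γ : Fin d → ℤ, ∃ r : ℕ, 1 ≤ r ∧ V = rwBox γ r}

/-- The (μ-uniform) infinite-volume limit of a set function `φ` along the family `𝒱`
equals `L`. -/
def IVLim {Y : Type*} [MeasurableSpace Y] (μ : Measure Y) (𝒱 : Set (Set Y))
    (φ : Set Y → ℝ) (L : ℝ) : Prop :=
  ∀ ε > 0, ∃ M : ℝ, 0 < M ∧ ∀ V ∈ 𝒱, M ≤ (μ V).toReal → |φ V - L| < ε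

/-- The normalized average `μ_V(F) = (1/μ(V)) ∫_V F dμ` of `F` over a set `V`. -/
def avgOn {Y : Type*} [MeasurableSpace Y] (μ : Measure Y) (F : Y → ℝ) (V : Set Y) : ℝ :=
  (∫ x in V, F x ∂μ) / (μ V).toReal

/-- `F` possesses the infinite-volume average `L` along the family `𝒱`. -/
def HasAvg {Y : Type*} [MeasurableSpace Y] (μ : Measure Y) (𝒱 : Set (Set Y))
    (F : Y → ℝ) (L : ℝ) : Prop :=
  IVLim μ 𝒱 (avgOn μ F) L

/-- The σ-algebra `ℬ` generated by the partition `{S_α}` of the phase space into unit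
squares `S_α = {α} × [0,1)²`. -/
def rwB0 (d : ℕ) : MeasurableSpace (RWSpace d) :=
  MeasurableSpace.generateFrom
    {S | ∃ α : Fin d → ℤ, S = {α} ×ˢ (Set.Ico (0:ℝ) 1 ×ˢ Set.Ico (0:ℝ) 1)}

/-- The σ-algebra `T^k ℬ = {T^{-k} A : A ∈ ℬ}` for `k ∈ ℤ`. -/
def rwBk {d : ℕ} (R : RW d) (k : ℤ) : MeasurableSpace (RWSpace d) :=
  MeasurableSpace.comap (RW.iterZ R k) (rwB0 d)

/-- The σ-algebra `ℬ_{ℓ,m} = T^ℓ ℬ ∨ ⋯ ∨ T^m ℬ`. -/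
def rwBlm {d : ℕ} (R : RW d) (l m : ℤ) : MeasurableSpace (RWSpace d) :=
  ⨆ k ∈ Finset.Icc l m, rwBk R k

/-- `L^∞(X, ℬ_{−m,m}, μ)`: bounded observables measurable w.r.t. `ℬ_{−m,m}`. -/
def rwLinftyB {d : ℕ} (R : RW d) (m : ℕ) : Set (RWSpace d → ℝ) :=
  {F | Measurable[rwBlm R (-(m : ℤ)) (m : ℤ)] F ∧ ∃ C, ∀ x, |F x| ≤ C}

/-- The class of global observables `𝔊_m`. -/
def rwG {d : ℕ} (R : RW d) (m : ℕ) : Set (RWSpace d → ℝ) :=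
  {F | F ∈ rwLinftyB R m ∧ ∃ A : ℝ, HasAvg (rwMeasure d) (rwFamily d) F A}


namespace RW
variable {d : ℕ} (R : RW d)

lemma q_mono : Monotone R.q := fun _ _ hab =>
  Finset.sum_le_sum_of_subset_of_nonneg (Finset.range_subset_range.2 hab)
    (fun _ _ _ => R.nonneg _)

lemma q_nonneg (k : ℕ) : 0 ≤ R.q k := Finset.sum_nonneg fun _ _ => R.nonneg _

lemma q_tendsto : Tendsto R.q atTop (𝓝 1) := by
  have h : HasSum (fun j => R.p (R.e j)) 1 := (Equiv.hasSum_iff R.e).2 R.total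
  exact h.tendsto_sum_nat

lemma q_le_one (k : ℕ) : R.q k ≤ 1 := R.q_mono.ge_of_tendsto R.q_tendsto k

lemma q_zero : R.q 0 = 0 := by simp [q]

lemma bddAbove_idxSet {b : ℝ} (hb : b < 1) : BddAbove {j | R.q j ≤ b} := by
  by_contra h
  have h1 : ∀ n : ℕ, R.q n ≤ b := by
    intro n
    obtain ⟨j, hj, hnj⟩ := not_bddAbove_iff.1 h n
    exact le_trans (R.q_mono hnj.le) hj
  have := le_of_tendsto R.q_tendsto (Eventually.of_forall h1)
  linarith

lemma idx_mono {a b : ℝ} (ha : 0 ≤ a) (hab : a ≤ b) (hb : b < 1) :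
    R.idx a ≤ R.idx b := by
  refine csSup_le_csSup (R.bddAbove_idxSet hb) ⟨0, by simp [R.q_zero, ha]⟩ ?_
  exact fun j hj => le_trans hj hab

lemma idx_neg {y : ℝ} (hy : y < 0) : R.idx y = 0 := by
  have : {j | R.q j ≤ y} = ∅ := by
    ext j; simp only [Set.mem_setOf_eq, Set.mem_empty_iff_false, iff_false]
    intro h; linarith [R.q_nonneg j]
  simp [idx, this]

lemma idx_ge_one {y : ℝ} (hy : 1 ≤ y) : R.idx y = R.idx 1 := by
  have h1 : {j | R.q j ≤ y} = Set.univ := Set.eq_univ_of_forall fun j =>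
    le_trans (R.q_le_one j) hy
  have h2 : {j | R.q j ≤ (1:ℝ)} = Set.univ := Set.eq_univ_of_forall fun j => R.q_le_one j
  simp [idx, h1, h2]

lemma measurable_idx : Measurable R.idx := by
  apply measurable_to_countable'
  intro n
  have hdec : R.idx ⁻¹' {n} =
      ((if n = 0 then Set.Iio (0:ℝ) else ∅) ∪ {y | 0 ≤ y ∧ y < 1 ∧ R.idx y = n})
        ∪ (if R.idx 1 = n then Set.Ici (1:ℝ) else ∅) := by
    ext y
    simp only [Set.mem_preimage, Set.mem_singleton_iff, Set.mem_union, Set.mem_setOf_eq]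
    constructor
    · intro h
      rcases lt_or_ge y 0 with hy | hy
      · left; left
        rw [R.idx_neg hy] at h
        simp [← h, hy]
      · rcases lt_or_ge y 1 with hy1 | hy1
        · exact Or.inl (Or.inr ⟨hy, hy1, h⟩)
        · right
          rw [R.idx_ge_one hy1] at h
          simp [h, hy1]
    · rintro ((h | ⟨_, _, h⟩) | h)
      · split_ifs at h with h0
        · subst h0; exact R.idx_neg h
        · exact absurd h (Set.notMem_empty _)
      · exact h
      · split_ifs at h with h1
        · rw [R.idx_ge_one h]; exact h1
        · exact absurd h (Set.notMem_empty _)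
  rw [hdec]
  refine MeasurableSet.union (MeasurableSet.union ?_ ?_) ?_
  · split_ifs <;> simp [measurableSet_Iio]
  · have : Set.OrdConnected {y : ℝ | 0 ≤ y ∧ y < 1 ∧ R.idx y = n} := by
      constructor
      rintro x ⟨hx0, hx1, hxn⟩ y ⟨hy0, hy1, hyn⟩ z ⟨hzx, hzy⟩
      refine ⟨le_trans hx0 hzx, lt_of_le_of_lt hzy hy1, le_antisymm ?_ ?_⟩
      · rw [← hyn]; exact R.idx_mono (le_trans hx0 hzx) hzy hy1
      · rw [← hxn]; exact R.idx_mono hx0 hzx (lt_of_le_of_lt hzy hy1)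
    exact this.measurableSet
  · split_ifs <;> simp [measurableSet_Ici]

lemma measurable_comp_idx {γ : Type*} [MeasurableSpace γ] (f : ℕ → γ)
    {β : Type*} [MeasurableSpace β] {g : β → ℝ} (hg : Measurable g) :
    Measurable fun x => f (R.idx (g x)) :=
  (measurable_of_countable f).comp (R.measurable_idx.comp hg)

lemma measurable_T : Measurable R.T := by
  unfold T
  have h1 : Measurable fun x : RWSpace d => x.2.1 := measurable_snd.fst
  have h2 : Measurable fun x : RWSpace d => x.2.2 := measurable_snd.snd
  refine Measurable.prod ?_ (Measurable.prod ?_ ?_)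
  · refine measurable_pi_lambda _ fun i => ?_
    have : (fun x : RWSpace d => (x.1 + R.e (R.idx x.2.1)) i)
        = (fun z : ℤ × ℤ => z.1 + z.2) ∘
          (fun x : RWSpace d => (x.1 i, R.e (R.idx x.2.1) i)) := rfl
    rw [this]
    exact (measurable_of_countable _).comp
      (((measurable_pi_apply i).comp measurable_fst).prodMk
        (R.measurable_comp_idx (fun n => R.e n i) h1))
  · exact (h1.sub (R.measurable_comp_idx R.q h1)).div
      (R.measurable_comp_idx (fun n => R.p (R.e n)) h1)
  · exact ((R.measurable_comp_idx (fun n => R.p (R.e n)) h1).mul h2).add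
      (R.measurable_comp_idx R.q h1)

lemma measurable_Tinv : Measurable R.Tinv := by
  unfold Tinv
  have h1 : Measurable fun x : RWSpace d => x.2.1 := measurable_snd.fst
  have h2 : Measurable fun x : RWSpace d => x.2.2 := measurable_snd.snd
  refine Measurable.prod ?_ (Measurable.prod ?_ ?_)
  · refine measurable_pi_lambda _ fun i => ?_
    have : (fun x : RWSpace d => (x.1 - R.e (R.idx x.2.2)) i)
        = (fun z : ℤ × ℤ => z.1 - z.2) ∘
          (fun x : RWSpace d => (x.1 i, R.e (R.idx x.2.2) i)) := rfl
    rw [this]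
    exact (measurable_of_countable _).comp
      (((measurable_pi_apply i).comp measurable_fst).prodMk
        (R.measurable_comp_idx (fun n => R.e n i) h2))
  · exact ((R.measurable_comp_idx (fun n => R.p (R.e n)) h2).mul h1).add
      (R.measurable_comp_idx R.q h2)
  · exact (h2.sub (R.measurable_comp_idx R.q h2)).div
      (R.measurable_comp_idx (fun n => R.p (R.e n)) h2)

lemma measurable_iterZ (t : ℤ) : Measurable (R.iterZ t) := by
  unfold iterZ
  split_ifs
  · exact R.measurable_T.iterate _
  · exact R.measurable_Tinv.iterate _

end RW


section Aux

variable {d : ℕ}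

lemma rwB0_le (d : ℕ) : rwB0 d ≤ (inferInstance : MeasurableSpace (RWSpace d)) := by
  refine MeasurableSpace.generateFrom_le ?_
  rintro S ⟨α, rfl⟩
  exact (measurableSet_singleton α).prod (measurableSet_Ico.prod measurableSet_Ico)

lemma rwBk_le (R : RW d) (k : ℤ) :
    rwBk R k ≤ (inferInstance : MeasurableSpace (RWSpace d)) :=
  le_trans (MeasurableSpace.comap_mono (rwB0_le d))
    (measurable_iff_comap_le.mp (R.measurable_iterZ k))

lemma rwBlm_le (R : RW d) (l m : ℤ) :
    rwBlm R l m ≤ (inferInstance : MeasurableSpace (RWSpace d)) :=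
  iSup_le fun k => iSup_le fun _ => rwBk_le R k

lemma rwBk_zero (R : RW d) : rwBk R 0 = rwB0 d := by
  have h : R.iterZ 0 = id := by
    simp [RW.iterZ]
  rw [rwBk, h, MeasurableSpace.comap_id]

lemma rwB0_le_rwBlm (R : RW d) (m : ℕ) : rwB0 d ≤ rwBlm R (-(m : ℤ)) (m : ℤ) := by
  have h0 : (0 : ℤ) ∈ Finset.Icc (-(m : ℤ)) (m : ℤ) := by
    simp [Finset.mem_Icc]
  calc rwB0 d = rwBk R 0 := (rwBk_zero R).symm
    _ ≤ _ := le_biSup _ h0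

/-- The unit square. -/
def rwSq : Set (ℝ × ℝ) := Set.Ico (0:ℝ) 1 ×ˢ Set.Ico (0:ℝ) 1

/-- The square `S_α`. -/
def rwS (α : Fin d → ℤ) : Set (RWSpace d) := {α} ×ˢ rwSq

lemma measurableSet_rwSq : MeasurableSet rwSq :=
  measurableSet_Ico.prod measurableSet_Ico

lemma measurableSet_rwS (α : Fin d → ℤ) : MeasurableSet (rwS α) :=
  (measurableSet_singleton α).prod measurableSet_rwSq

lemma rwMeasure_prod (s : Set (Fin d → ℤ)) :
    rwMeasure d (s ×ˢ rwSq) = Measure.count s := by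
  rw [rwMeasure, rwSq, Measure.prod_prod, Measure.prod_prod,
    Measure.restrict_apply measurableSet_Ico, Set.inter_self, Real.volume_Ico]
  simp

lemma rwMeasure_rwS (α : Fin d → ℤ) : rwMeasure d (rwS α) = 1 := by
  rw [rwS, rwMeasure_prod, Measure.count_singleton]

/-- The finset of lattice points in the box. -/
def rwBoxF (γ : Fin d → ℤ) (r : ℕ) : Finset (Fin d → ℤ) :=
  Finset.Icc (fun i => γ i - r) (fun i => γ i + r)

lemma mem_rwBoxF {γ : Fin d → ℤ} {r : ℕ} {α : Fin d → ℤ} :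
    α ∈ rwBoxF γ r ↔ ∀ i, |α i - γ i| ≤ (r : ℤ) := by
  simp only [rwBoxF, Finset.mem_Icc, Pi.le_def]
  constructor
  · rintro ⟨h1, h2⟩ i
    rw [abs_le]
    constructor <;> [linarith [h1 i]; linarith [h2 i]]
  · intro h
    constructor <;> intro i <;> have := abs_le.1 (h i) <;>
      [linarith [this.1]; linarith [this.2]]

lemma rwBox_eq_prod (γ : Fin d → ℤ) (r : ℕ) :
    rwBox γ r = (↑(rwBoxF γ r) : Set (Fin d → ℤ)) ×ˢ rwSq := by
  ext x
  simp only [rwBox, Set.mem_setOf_eq, Set.mem_prod, Finset.coe_sort_coe,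
    Finset.mem_coe, mem_rwBoxF, rwSq]

lemma rwBox_eq_biUnion (γ : Fin d → ℤ) (r : ℕ) :
    rwBox γ r = ⋃ α ∈ rwBoxF γ r, rwS α := by
  rw [rwBox_eq_prod]
  ext x
  simp only [Set.mem_prod, Finset.mem_coe, Set.mem_iUnion, rwS,
    Set.mem_singleton_iff, exists_prop]
  constructor
  · rintro ⟨h1, h2⟩; exact ⟨x.1, h1, rfl, h2⟩
  · rintro ⟨α, hα, h1, h2⟩; exact ⟨h1 ▸ hα, h2⟩

lemma measurableSet_rwBox (γ : Fin d → ℤ) (r : ℕ) : MeasurableSet (rwBox γ r) := by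
  rw [rwBox_eq_biUnion]
  exact (rwBoxF γ r).measurableSet_biUnion fun α _ => measurableSet_rwS α

lemma card_rwBoxF (γ : Fin d → ℤ) (r : ℕ) : (rwBoxF γ r).card = (2 * r + 1) ^ d := by
  rw [rwBoxF, Pi.card_Icc]
  have : ∀ i : Fin d, (Finset.Icc (γ i - r) (γ i + r)).card = 2 * r + 1 := by
    intro i
    rw [Int.card_Icc]
    have : (γ i + r + 1 - (γ i - r)) = (2 * r + 1 : ℤ) := by ring
    rw [this]
    omega
  simp only [this, Finset.prod_const, Finset.card_univ, Fintype.card_fin]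

lemma rwMeasure_rwBox (γ : Fin d → ℤ) (r : ℕ) :
    rwMeasure d (rwBox γ r) = ((2 * r + 1) ^ d : ℕ) := by
  rw [rwBox_eq_prod, rwMeasure_prod, Measure.count_apply_finset, card_rwBoxF]

lemma rwMeasure_rwBox_toReal (γ : Fin d → ℤ) (r : ℕ) :
    (rwMeasure d (rwBox γ r)).toReal = ((2 * r + 1) ^ d : ℕ) := by
  rw [rwMeasure_rwBox, ENNReal.toReal_natCast]

lemma rwFamily_props {V : Set (RWSpace d)} (hV : V ∈ rwFamily d) :
    MeasurableSet V ∧ rwMeasure d V ≠ ⊤ ∧ 0 < (rwMeasure d V).toReal := by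
  obtain ⟨γ, r, hr, rfl⟩ := hV
  refine ⟨measurableSet_rwBox γ r, ?_, ?_⟩
  · rw [rwMeasure_rwBox]; exact ENNReal.natCast_ne_top _
  · rw [rwMeasure_rwBox_toReal]
    have : 0 < (2 * r + 1) ^ d := Nat.pow_pos (by omega)
    exact_mod_cast this

lemma exists_big_box (hd : 1 ≤ d) (M : ℝ) :
    ∃ V ∈ rwFamily d, M ≤ (rwMeasure d V).toReal := by
  obtain ⟨n, hn⟩ := exists_nat_ge M
  refine ⟨rwBox 0 (n + 1), ⟨0, n + 1, by omega, rfl⟩, ?_⟩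
  rw [rwMeasure_rwBox_toReal]
  have h1 : (n : ℝ) ≤ ((2 * (n + 1) + 1) ^ d : ℕ) := by
    have h2 : 2 * (n + 1) + 1 ≤ (2 * (n + 1) + 1) ^ d :=
      Nat.le_self_pow (by omega) _
    have : (n : ℕ) ≤ (2 * (n + 1) + 1) ^ d := by omega
    exact_mod_cast this
  linarith

end Aux


section Aux2

variable {Y : Type*} [MeasurableSpace Y] {μ : Measure Y}

lemma integrableOn_of_bound {f : Y → ℝ} {V : Set Y} (hV : μ V ≠ ⊤)
    (hf : AEMeasurable f μ) {C : ℝ} (hb : ∀ᵐ x ∂μ, |f x| ≤ C) :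
    IntegrableOn f V μ := by
  have hfin : IsFiniteMeasure (μ.restrict V) :=
    ⟨by rwa [Measure.restrict_apply_univ, lt_top_iff_ne_top]⟩
  refine ⟨(hf.restrict (s := V)).aestronglyMeasurable, ?_⟩
  refine HasFiniteIntegral.of_bounded (C := C) ?_
  exact ae_restrict_of_ae (hb.mono fun x h => by simpa [Real.norm_eq_abs] using h)

lemma abs_setIntegral_le {f : Y → ℝ} {V : Set Y} (hV : μ V ≠ ⊤)
    (hf : IntegrableOn f V μ) {C : ℝ} (hb : ∀ᵐ x ∂μ, |f x| ≤ C) :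
    |∫ x in V, f x ∂μ| ≤ C * (μ V).toReal := by
  have hfin : IsFiniteMeasure (μ.restrict V) :=
    ⟨by rwa [Measure.restrict_apply_univ, lt_top_iff_ne_top]⟩
  calc |∫ x in V, f x ∂μ| ≤ ∫ x in V, |f x| ∂μ := by
        simpa [Real.norm_eq_abs] using
          norm_integral_le_integral_norm (μ := μ.restrict V) f
    _ ≤ ∫ _ in V, C ∂μ := by
        refine integral_mono_ae hf.abs (integrable_const C) ?_
        exact ae_restrict_of_ae (hb.mono fun x h => h)
    _ = C * (μ V).toReal := by
        rw [setIntegral_const, smul_eq_mul, mul_comm]; rfl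

lemma avgOn_sub_le {f g : Y → ℝ} {V : Set Y} (hpos : 0 < (μ V).toReal)
    (hf : IntegrableOn f V μ) (hg : IntegrableOn g V μ) {C : ℝ}
    (hb : ∀ᵐ x ∂μ, |f x - g x| ≤ C) :
    |avgOn μ f V - avgOn μ g V| ≤ C := by
  have hV : μ V ≠ ⊤ := by
    intro h; rw [h] at hpos; simp at hpos
  unfold avgOn
  rw [div_sub_div_same, ← integral_sub hf hg, abs_div, abs_of_pos hpos,
    div_le_iff₀ hpos]
  exact abs_setIntegral_le hV (hf.sub hg) hb

lemma aemeasurable_of_approx {F : Y → ℝ}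
    (h : ∀ ε > 0, ∃ F' : Y → ℝ, AEMeasurable F' μ ∧ ∀ᵐ x ∂μ, |F x - F' x| ≤ ε) :
    AEMeasurable F μ := by
  have hpos : ∀ n : ℕ, (0:ℝ) < 1 / (n + 1) := fun n => by positivity
  choose G hGm hGa using fun n : ℕ => h (1 / (n + 1)) (hpos n)
  refine aemeasurable_of_tendsto_metrizable_ae atTop hGm ?_
  filter_upwards [ae_all_iff.2 hGa] with x hx
  rw [tendsto_iff_dist_tendsto_zero]
  refine squeeze_zero (fun n => dist_nonneg) (fun n => ?_)
    tendsto_one_div_add_atTop_nhds_zero_nat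
  rw [Real.dist_eq, abs_sub_comm]
  exact hx n

end Aux2


section Aux3

variable {d : ℕ}

lemma setIntegral_rwBox {f : RWSpace d → ℝ} {γ : Fin d → ℤ} {r : ℕ}
    (hf : IntegrableOn f (rwBox γ r) (rwMeasure d)) :
    ∫ x in rwBox γ r, f x ∂(rwMeasure d)
      = ∑ α ∈ rwBoxF γ r, ∫ x in rwS α, f x ∂(rwMeasure d) := by
  rw [rwBox_eq_biUnion]
  refine integral_biUnion_finset _ (fun α _ => measurableSet_rwS α) ?_ ?_
  · intro α _ β _ hne
    simp only [Function.onFun]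
    rw [Set.disjoint_left]
    rintro x h1 h2
    rw [rwS, Set.mem_prod, Set.mem_singleton_iff] at h1 h2
    exact hne (h1.1 ▸ h2.1)
  · intro α hα
    refine hf.mono_set ?_
    rw [rwBox_eq_biUnion]
    exact Set.subset_biUnion_of_mem hα

lemma setIntegral_rwS_const (α : Fin d → ℤ) (cv : ℝ) :
    ∫ _ in rwS α, cv ∂(rwMeasure d) = cv := by
  rw [setIntegral_const, Measure.real_def, rwMeasure_rwS]
  simp

/-- The correction function: the constant `df α` on each square `S_α`, `0` elsewhere. -/
def rwCorr (df : (Fin d → ℤ) → ℝ) : RWSpace d → ℝ :=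
  (Set.univ ×ˢ rwSq).indicator fun x => df x.1

lemma rwCorr_abs_le {df : (Fin d → ℤ) → ℝ} {C : ℝ} (hC : 0 ≤ C)
    (h : ∀ α, |df α| ≤ C) (x : RWSpace d) : |rwCorr df x| ≤ C := by
  rw [rwCorr]
  by_cases hx : x ∈ (Set.univ ×ˢ rwSq : Set (RWSpace d))
  · rw [Set.indicator_of_mem hx]; exact h _
  · rw [Set.indicator_of_notMem hx]; simpa using hC

lemma rwCorr_eq_on {df : (Fin d → ℤ) → ℝ} {α : Fin d → ℤ} {x : RWSpace d}
    (hx : x ∈ rwS α) : rwCorr df x = df α := by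
  rw [rwS, Set.mem_prod, Set.mem_singleton_iff] at hx
  rw [rwCorr, Set.indicator_of_mem (by exact ⟨Set.mem_univ _, hx.2⟩), hx.1]

lemma rwCorr_measurable (R : RW d) (df : (Fin d → ℤ) → ℝ) :
    Measurable[rwB0 d] (rwCorr df) := by
  classical
  set proj : RWSpace d → ℕ :=
    (Set.univ ×ˢ rwSq).indicator fun x => R.e.symm x.1 + 1 with hproj_def
  have hproj : Measurable[rwB0 d] proj := by
    refine @measurable_to_countable' ℕ (RWSpace d) _ _ (rwB0 d) proj fun n => ?_
    match n with
    | 0 =>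
      have : proj ⁻¹' {0}
          = (⋃ α : Fin d → ℤ, ({α} ×ˢ (Set.Ico (0:ℝ) 1 ×ˢ Set.Ico (0:ℝ) 1)))ᶜ := by
        ext x
        simp only [Set.mem_preimage, Set.mem_singleton_iff, Set.mem_compl_iff,
          Set.mem_iUnion, hproj_def]
        by_cases hx : x ∈ (Set.univ ×ˢ rwSq : Set (RWSpace d))
        · rw [Set.indicator_of_mem hx]
          simp only [Nat.succ_ne_zero, add_eq_zero, one_ne_zero, and_false,
            false_iff]
          intro h
          rw [Set.mem_prod] at hx
          exact h ⟨x.1, Set.mem_prod.2 ⟨rfl, hx.2⟩⟩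
        · rw [Set.indicator_of_notMem hx]
          simp only [true_iff]
          rintro ⟨α, hα⟩
          rw [Set.mem_prod, Set.mem_singleton_iff] at hα
          exact hx (Set.mem_prod.2 ⟨Set.mem_univ _, hα.2⟩)
      rw [this]
      exact (MeasurableSet.iUnion fun α =>
        MeasurableSpace.measurableSet_generateFrom (by exact ⟨α, rfl⟩)).compl
    | Nat.succ k =>
      have : proj ⁻¹' {k + 1}
          = {R.e k} ×ˢ (Set.Ico (0:ℝ) 1 ×ˢ Set.Ico (0:ℝ) 1) := by
        ext x
        simp only [Set.mem_preimage, Set.mem_singleton_iff, hproj_def]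
        by_cases hx : x ∈ (Set.univ ×ˢ rwSq : Set (RWSpace d))
        · rw [Set.indicator_of_mem hx]
          rw [Set.mem_prod, Set.mem_singleton_iff]
          rw [Set.mem_prod] at hx
          constructor
          · intro h
            have : R.e.symm x.1 = k := by omega
            exact ⟨by rw [← this, Equiv.apply_symm_apply], hx.2⟩
          · rintro ⟨h1, h2⟩
            rw [h1, Equiv.symm_apply_apply]
        · rw [Set.indicator_of_notMem hx]
          constructor
          · intro h; omega
          · intro hmem
            rw [Set.mem_prod, Set.mem_singleton_iff] at hmem
            exact absurd (Set.mem_prod.2 ⟨Set.mem_univ _, hmem.2⟩) hx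
      rw [this]
      exact MeasurableSpace.measurableSet_generateFrom (by exact ⟨R.e k, rfl⟩)
  have hcomp : rwCorr df
      = (fun n : ℕ => if n = 0 then 0 else df (R.e (n - 1))) ∘ proj := by
    funext x
    simp only [Function.comp, hproj_def, rwCorr]
    by_cases hx : x ∈ (Set.univ ×ˢ rwSq : Set (RWSpace d))
    · rw [Set.indicator_of_mem hx, Set.indicator_of_mem hx]
      simp [Equiv.symm_apply_apply]
    · rw [Set.indicator_of_notMem hx, Set.indicator_of_notMem hx]
      simp
  rw [hcomp]
  exact (measurable_of_countable _).comp hproj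

end Aux3

/-- Lemma 4.4: the `L^∞`-closure `𝔊` of `⋃_m 𝔊_m` equals the set of all `F` in the
`L^∞`-closure of `⋃_m L^∞(X, ℬ_{−m,m}, μ)` possessing an infinite-volume average. -/
theorem rw_global_class (d : ℕ) (hd : 1 ≤ d) (R : RW d) :
    {F : RWSpace d → ℝ | ∀ ε > 0, ∃ m : ℕ, ∃ F' ∈ rwG R m,
        ∀ᵐ x ∂(rwMeasure d), |F x - F' x| ≤ ε}
      = {F : RWSpace d → ℝ |
          (∀ ε > 0, ∃ m : ℕ, ∃ F' ∈ rwLinftyB R m,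
            ∀ᵐ x ∂(rwMeasure d), |F x - F' x| ≤ ε)
          ∧ ∃ A : ℝ, HasAvg (rwMeasure d) (rwFamily d) F A} := by
  set μ := rwMeasure d with hμdef
  ext F
  simp only [Set.mem_setOf_eq]
  constructor
  · -- 𝔊 ⊆ closure ∩ {Avg exists}
    intro h
    have happrox : ∀ ε > 0, ∃ m : ℕ, ∃ F' ∈ rwLinftyB R m,
        ∀ᵐ x ∂μ, |F x - F' x| ≤ ε := by
      intro ε hε
      obtain ⟨m, F', hF', hae⟩ := h ε hε
      exact ⟨m, F', hF'.1, hae⟩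
    refine ⟨happrox, ?_⟩
    have hFmeas : AEMeasurable F μ := by
      apply aemeasurable_of_approx
      intro ε hε
      obtain ⟨m, F', hF', hae⟩ := happrox ε hε
      exact ⟨F', ((hF'.1).mono (rwBlm_le R _ _) le_rfl).aemeasurable, hae⟩
    obtain ⟨m₀, F₀, hF₀, hae₀⟩ := happrox 1 one_pos
    obtain ⟨C₀, hC₀⟩ := hF₀.2
    have hFbdd : ∀ᵐ x ∂μ, |F x| ≤ C₀ + 1 := by
      filter_upwards [hae₀] with x hx
      have h2 : |F x| ≤ |F x - F₀ x| + |F₀ x| := by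
        have := abs_add_le (F x - F₀ x) (F₀ x); simpa using this
      have := hC₀ x
      linarith
    have hpos : ∀ n : ℕ, (0:ℝ) < 1/(n+1) := fun n => by positivity
    choose m G hG hGa using fun n : ℕ => h (1/(n+1)) (hpos n)
    choose A hA using fun n => (hG n).2
    have hGmeas : ∀ n, Measurable (G n) :=
      fun n => ((hG n).1.1).mono (rwBlm_le R _ _) le_rfl
    have hInt : ∀ n, ∀ V ∈ rwFamily d, IntegrableOn (G n) V μ := by
      intro n V hV
      obtain ⟨Cn, hCn⟩ := (hG n).1.2
      exact integrableOn_of_bound (rwFamily_props hV).2.1 (hGmeas n).aemeasurable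
        (Eventually.of_forall fun x => hCn x)
    have hIntF : ∀ V ∈ rwFamily d, IntegrableOn F V μ := fun V hV =>
      integrableOn_of_bound (rwFamily_props hV).2.1 hFmeas hFbdd
    have hdist : ∀ n k : ℕ, |A n - A k| ≤ 1/(n+1) + 1/(k+1) := by
      intro n k
      refine le_of_forall_pos_le_add fun δ hδ => ?_
      obtain ⟨Mn, hMn, hn⟩ := hA n (δ/2) (by positivity)
      obtain ⟨Mk, hMk, hk⟩ := hA k (δ/2) (by positivity)
      obtain ⟨V, hV, hVM⟩ := exists_big_box hd (max Mn Mk)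
      have h1 := hn V hV (le_trans (le_max_left _ _) hVM)
      have h2 := hk V hV (le_trans (le_max_right _ _) hVM)
      have h3 : |avgOn μ (G n) V - avgOn μ (G k) V| ≤ 1/(n+1) + 1/(k+1) := by
        refine avgOn_sub_le (rwFamily_props hV).2.2 (hInt n V hV) (hInt k V hV) ?_
        filter_upwards [hGa n, hGa k] with x hx1 hx2
        have heq : G n x - G k x = -(F x - G n x) + (F x - G k x) := by ring
        calc |G n x - G k x| ≤ |F x - G n x| + |F x - G k x| := by
              rw [heq]
              refine le_trans (abs_add_le _ _) ?_
              rw [abs_neg]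
          _ ≤ 1/(n+1) + 1/(k+1) := add_le_add hx1 hx2
      have t1 : |A n - A k| ≤ |A n - avgOn μ (G n) V| +
          |avgOn μ (G n) V - avgOn μ (G k) V| + |avgOn μ (G k) V - A k| := by
        have := abs_sub_le (A n) (avgOn μ (G n) V) (A k)
        have := abs_sub_le (avgOn μ (G n) V) (avgOn μ (G k) V) (A k)
        linarith
      rw [abs_sub_comm] at h1
      linarith
    have hcauchy : CauchySeq A := by
      refine cauchySeq_of_le_tendsto_0 (fun N => 1/(N+1) + 1/(N+1))
        (fun n k N hn hk => ?_) ?_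
      · rw [Real.dist_eq]
        have h1 : 1/((n:ℝ)+1) ≤ 1/((N:ℝ)+1) := by
          apply one_div_le_one_div_of_le (by positivity)
          have : (N:ℝ) ≤ n := by exact_mod_cast hn
          linarith
        have h2 : 1/((k:ℝ)+1) ≤ 1/((N:ℝ)+1) := by
          apply one_div_le_one_div_of_le (by positivity)
          have : (N:ℝ) ≤ k := by exact_mod_cast hk
          linarith
        linarith [hdist n k]
      · have h0 : Tendsto (fun n : ℕ => 1 / ((n : ℝ) + 1)) atTop (𝓝 0) :=
          tendsto_one_div_add_atTop_nhds_zero_nat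
        simpa using h0.add h0
    obtain ⟨L, hL⟩ := cauchySeq_tendsto_of_complete hcauchy
    refine ⟨L, ?_⟩
    intro ε hε
    have h1 : ∀ᶠ n : ℕ in atTop, 1/((n:ℝ)+1) < ε/3 :=
      tendsto_one_div_add_atTop_nhds_zero_nat.eventually_lt_const (by positivity)
    have h2 : ∀ᶠ n : ℕ in atTop, |A n - L| < ε/3 := by
      have h3 : Tendsto (fun n => |A n - L|) atTop (𝓝 0) := by
        have := hL.sub_const L
        simpa using this.abs
      exact h3.eventually_lt_const (by positivity)
    obtain ⟨n, hn1, hn2⟩ := (h1.and h2).exists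
    obtain ⟨M, hM, hMav⟩ := hA n (ε/3) (by positivity)
    refine ⟨M, hM, fun V hV hVM => ?_⟩
    have hgap : |avgOn μ F V - avgOn μ (G n) V| ≤ 1/(n+1) :=
      avgOn_sub_le (rwFamily_props hV).2.2 (hIntF V hV) (hInt n V hV) (hGa n)
    have hc := hMav V hV hVM
    have t1 : |avgOn μ F V - L| ≤ |avgOn μ F V - avgOn μ (G n) V| +
        |avgOn μ (G n) V - A n| + |A n - L| := by
      have := abs_sub_le (avgOn μ F V) (avgOn μ (G n) V) L
      have := abs_sub_le (avgOn μ (G n) V) (A n) L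
      linarith
    have : (1:ℝ)/(n+1) < ε/3 := hn1
    linarith
  · -- closure ∩ {Avg exists} ⊆ 𝔊
    rintro ⟨happrox, A, hA⟩
    have hFmeas : AEMeasurable F μ := by
      apply aemeasurable_of_approx
      intro ε hε
      obtain ⟨m, F', hF', hae⟩ := happrox ε hε
      exact ⟨F', ((hF'.1).mono (rwBlm_le R _ _) le_rfl).aemeasurable, hae⟩
    obtain ⟨m₀, F₀, hF₀, hae₀⟩ := happrox 1 one_pos
    obtain ⟨C₀, hC₀⟩ := hF₀.2
    have hFbdd : ∀ᵐ x ∂μ, |F x| ≤ C₀ + 1 := by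
      filter_upwards [hae₀] with x hx
      have h2 : |F x| ≤ |F x - F₀ x| + |F₀ x| := by
        have := abs_add_le (F x - F₀ x) (F₀ x); simpa using this
      have := hC₀ x
      linarith
    intro ε hε
    obtain ⟨m, F', hF', hae⟩ := happrox (ε/2) (by positivity)
    obtain ⟨C', hC'⟩ := hF'.2
    have hF'meas : Measurable F' := (hF'.1).mono (rwBlm_le R _ _) le_rfl
    set df : (Fin d → ℤ) → ℝ := fun α => ∫ x in rwS α, (F x - F' x) ∂μ with hdf
    set c : RWSpace d → ℝ := rwCorr df with hc
    have hcmeas0 : Measurable[rwB0 d] c := rwCorr_measurable R df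
    have hcmeas : Measurable c := hcmeas0.mono (rwB0_le d) le_rfl
    have hF''meas : Measurable[rwBlm R (-(m:ℤ)) (m:ℤ)] (fun x => F' x + c x) :=
      (hF'.1).add (hcmeas0.mono (rwB0_le_rwBlm R m) le_rfl)
    have hS_ne : ∀ α : Fin d → ℤ, μ (rwS α) ≠ ⊤ := fun α => by
      rw [hμdef, rwMeasure_rwS]; exact ENNReal.one_ne_top
    have hsubmeas : AEMeasurable (fun x => F x - F' x) μ :=
      hFmeas.sub hF'meas.aemeasurable
    have hdf_le : ∀ α, |df α| ≤ ε/2 := by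
      intro α
      have h1 : IntegrableOn (fun x => F x - F' x) (rwS α) μ :=
        integrableOn_of_bound (hS_ne α) hsubmeas hae
      have h2 := abs_setIntegral_le (hS_ne α) h1 hae
      rw [hμdef, rwMeasure_rwS] at h2
      simpa [hdf] using h2
    have hc_le : ∀ x, |c x| ≤ ε/2 :=
      rwCorr_abs_le (by positivity) hdf_le
    have key : ∀ V ∈ rwFamily d, avgOn μ (fun x => F' x + c x) V = avgOn μ F V := by
      rintro V ⟨γ, r, hr, rfl⟩
      have hVfam : rwBox γ r ∈ rwFamily d := ⟨γ, r, hr, rfl⟩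
      have hμV := (rwFamily_props hVfam).2.1
      have hIF : IntegrableOn F (rwBox γ r) μ :=
        integrableOn_of_bound hμV hFmeas hFbdd
      have hIF' : IntegrableOn F' (rwBox γ r) μ :=
        integrableOn_of_bound hμV hF'meas.aemeasurable (Eventually.of_forall hC')
      have hIc : IntegrableOn c (rwBox γ r) μ :=
        integrableOn_of_bound hμV hcmeas.aemeasurable (Eventually.of_forall hc_le)
      have hIsub : IntegrableOn (fun x => F x - F' x) (rwBox γ r) μ := hIF.sub hIF'
      have e1 : ∫ x in rwBox γ r, (F' x + c x) ∂μ
          = (∫ x in rwBox γ r, F' x ∂μ) + ∫ x in rwBox γ r, c x ∂μ :=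
        integral_add hIF' hIc
      have e2 : ∫ x in rwBox γ r, c x ∂μ = ∑ α ∈ rwBoxF γ r, df α := by
        rw [hμdef] at hIc ⊢
        rw [setIntegral_rwBox hIc]
        refine Finset.sum_congr rfl fun α hα => ?_
        rw [show (∫ x in rwS α, c x ∂(rwMeasure d)) = ∫ _ in rwS α, df α ∂(rwMeasure d)
          from setIntegral_congr_fun (measurableSet_rwS α)
            fun x hx => by rw [hc]; exact rwCorr_eq_on hx]
        exact setIntegral_rwS_const α (df α)
      have e3 : ∫ x in rwBox γ r, (F x - F' x) ∂μ = ∑ α ∈ rwBoxF γ r, df α := by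
        rw [hμdef] at hIsub ⊢
        rw [setIntegral_rwBox hIsub]
      have e4 : ∫ x in rwBox γ r, (F x - F' x) ∂μ
          = (∫ x in rwBox γ r, F x ∂μ) - ∫ x in rwBox γ r, F' x ∂μ :=
        integral_sub hIF hIF'
      unfold avgOn
      rw [e1, e2, ← e3, e4]
      ring_nf
    refine ⟨m, fun x => F' x + c x,
      ⟨⟨hF''meas, C' + ε/2, fun x => ?_⟩, A, ?_⟩, ?_⟩
    · calc |F' x + c x| ≤ |F' x| + |c x| := abs_add_le _ _
        _ ≤ C' + ε/2 := add_le_add (hC' x) (hc_le x)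
    · intro ε' hε'
      obtain ⟨M, hM, hMav⟩ := hA ε' hε'
      refine ⟨M, hM, fun V hV hVM => ?_⟩
      rw [key V hV]
      exact hMav V hV hVM
    · filter_upwards [hae] with x hx
      have heq : F x - (F' x + c x) = (F x - F' x) + -(c x) := by ring
      calc |F x - (F' x + c x)| ≤ |F x - F' x| + |c x| := by
            rw [heq]
            refine le_trans (abs_add_le _ _) ?_
            rw [abs_neg]
        _ ≤ ε/2 + ε/2 := add_le_add hx (hc_le x)
        _ = ε := by ring
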